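/- A vertex cut is a funnel node: let V be a finite set of nodes partitioned into nonempty disjoint sets A, B and a singleton {j}, and let E be a directed edge relation on V. Let E^A be obtained from E by deleting every edge from a node of B into j (so edges into j come only from A), and let E^B be obtained from E by deleting every edge from a node of A into j. Suppose j is a vertex cut between A and B: there is no directed path in E avoiding j from any node of A to any node of B, and none from any node of B to any node of A. Then j is a funnel node of A and B: there is no node m ∈ A ∪ B such that there is a directed path from m to j in E^A and also a directed path from m to j in E^B. -/

import Mathlib

/-- From any path `m → j` with `m ≠ j`, extract a `j`-avoiding prefix ending at
some node `a ≠ j` that has an edge into `j`. -/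
lemma exists_avoiding_prefix {V : Type*} (r : V → V → Prop) (j : V) :
    ∀ m, Relation.ReflTransGen r m j → m ≠ j →
      ∃ a, a ≠ j ∧ r a j ∧
        Relation.ReflTransGen (fun k l => r k l ∧ k ≠ j ∧ l ≠ j) m a := by
  intro m h
  induction h using Relation.ReflTransGen.head_induction_on with
  | refl => intro h; exact absurd rfl h
  | head hmc _ ih =>
    rename_i m c _
    intro hm
    by_cases hc : c = j
    · exact ⟨m, hm, hc ▸ hmc, Relation.ReflTransGen.refl⟩
    · obtain ⟨a, haj, har, hpath⟩ := ih hc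
      exact ⟨a, haj, har, Relation.ReflTransGen.head ⟨hmc, hm, hc⟩ hpath⟩


/-- A vertex cut is a funnel node: if `{A, B, {j}}` partitions the finite node
set `V` and there is no directed path avoiding `j` from `A` to `B` nor from `B`
to `A`, then no node `m ∈ A ∪ B` has a directed path to `j` both in the network
`E^A` (edges from `B` into `j` deleted) and in the network `E^B` (edges from `A`
into `j` deleted). -/
theorem vertex_cut_is_funnel_node
    {V : Type*} [Fintype V] (A B : Set V) (j : V) (E : V → V → Prop)
    (hA : A.Nonempty) (hB : B.Nonempty) (hAB : Disjoint A B)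
    (hjA : j ∉ A) (hjB : j ∉ B) (hcover : A ∪ B ∪ {j} = Set.univ)
    (hcut : ∀ a ∈ A, ∀ b ∈ B,
      ¬ Relation.ReflTransGen (fun k l => E k l ∧ k ≠ j ∧ l ≠ j) a b ∧
      ¬ Relation.ReflTransGen (fun k l => E k l ∧ k ≠ j ∧ l ≠ j) b a) :
    ¬ ∃ m ∈ A ∪ B,
        Relation.ReflTransGen (fun k l => E k l ∧ ¬ (k ∈ B ∧ l = j)) m j ∧
        Relation.ReflTransGen (fun k l => E k l ∧ ¬ (k ∈ A ∧ l = j)) m j := by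
  rintro ⟨m, hm, hpA, hpB⟩
  have hmj : m ≠ j := by
    rintro rfl
    cases hm with
    | inl h => exact hjA h
    | inr h => exact hjB h
  obtain ⟨a, haj, ⟨haE, haB⟩, hpa⟩ := exists_avoiding_prefix _ j m hpA hmj
  obtain ⟨b, hbj, ⟨hbE, hbA⟩, hpb⟩ := exists_avoiding_prefix _ j m hpB hmj
  have haA : a ∈ A := by
    have : a ∈ A ∪ B ∪ {j} := hcover ▸ Set.mem_univ a
    rcases this with (h | h) | h
    · exact h
    · exact absurd ⟨h, rfl⟩ haB
    · exact absurd h haj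
  have hbB : b ∈ B := by
    have : b ∈ A ∪ B ∪ {j} := hcover ▸ Set.mem_univ b
    rcases this with (h | h) | h
    · exact absurd ⟨h, rfl⟩ hbA
    · exact h
    · exact absurd h hbj
  cases hm with
  | inl hmA =>
    exact (hcut m hmA b hbB).1
      (Relation.ReflTransGen.mono (r := fun k l => (E k l ∧ ¬(k ∈ A ∧ l = j)) ∧ k ≠ j ∧ l ≠ j)
        (p := fun k l => E k l ∧ k ≠ j ∧ l ≠ j) (fun k l ⟨⟨hE, _⟩, hk, hl⟩ => ⟨hE, hk, hl⟩) _ _ hpb)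
  | inr hmB =>
    exact (hcut a haA m hmB).2
      (Relation.ReflTransGen.mono (r := fun k l => (E k l ∧ ¬(k ∈ B ∧ l = j)) ∧ k ≠ j ∧ l ≠ j)
        (p := fun k l => E k l ∧ k ≠ j ∧ l ≠ j) (fun k l ⟨⟨hE, _⟩, hk, hl⟩ => ⟨hE, hk, hl⟩) _ _ hpa)
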